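/- Let v₁, v₂, v₃ ∈ ℝ² be the direction vectors of the three edges forming a cycle, i.e. suppose there exist positive real numbers l₁, l₂, l₃ with l₁·v₁ + l₂·v₂ + l₃·v₃ = 0. Then the absolute value of the determinant of the 3×3 matrix whose first row is (1,1,1), whose second row is (v₁₍₁₎, v₂₍₁₎, v₃₍₁₎) and whose third row is (v₁₍₂₎, v₂₍₂₎, v₃₍₂₎) equals |δ(v₁,v₂)| + |δ(v₁,v₃)| + |δ(v₂,v₃)| (in the dual picture, this sum of three 2×2 determinants is the double area of the triangle dual to the vertex obtained by shrinking the cycle, i.e. the multiplicity of that vertex). -/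
import Mathlib


/-- δ(x,y) = x₁y₂ − x₂y₁ for x, y ∈ ℝ². -/
def del (x y : ℝ × ℝ) : ℝ := x.1 * y.2 - x.2 * y.1

/-- If v₁, v₂, v₃ are the directions of the three edges forming a cycle (i.e. some
positive combination of them vanishes), then the absolute value of the determinant of
the 3×3 matrix with first row (1,1,1) and the coordinates of the vᵢ below equals
|δ(v₁,v₂)| + |δ(v₁,v₃)| + |δ(v₂,v₃)|, the multiplicity of the vertex obtained by
shrinking the cycle. -/
theorem shrink_cycle_multiplicity (v₁ v₂ v₃ : ℝ × ℝ)
    (h : ∃ l₁ l₂ l₃ : ℝ, 0 < l₁ ∧ 0 < l₂ ∧ 0 < l₃ ∧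
      l₁ • v₁ + l₂ • v₂ + l₃ • v₃ = 0) :
    |(!![(1 : ℝ), 1, 1;
         v₁.1, v₂.1, v₃.1;
         v₁.2, v₂.2, v₃.2]).det|
      = |del v₁ v₂| + |del v₁ v₃| + |del v₂ v₃| := by
  obtain ⟨l₁, l₂, l₃, h1, h2, h3, heq⟩ := h
  have e1 : l₁ * v₁.1 + l₂ * v₂.1 + l₃ * v₃.1 = 0 := by
    have := congrArg Prod.fst heq
    simpa using this
  have e2 : l₁ * v₁.2 + l₂ * v₂.2 + l₃ * v₃.2 = 0 := by
    have := congrArg Prod.snd heq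
    simpa using this
  have h3' : l₃ ≠ 0 := ne_of_gt h3
  have d23 : del v₂ v₃ = (l₁ / l₃) * del v₁ v₂ := by
    have key : del v₂ v₃ * l₃ = l₁ * del v₁ v₂ := by
      unfold del; linear_combination v₂.1 * e2 - v₂.2 * e1
    field_simp
    linarith [key]
  have d13 : del v₁ v₃ = -(l₂ / l₃) * del v₁ v₂ := by
    have key : del v₁ v₃ * l₃ = -l₂ * del v₁ v₂ := by
      unfold del; linear_combination v₁.1 * e2 - v₁.2 * e1
    field_simp
    linarith [key]
  have hdet : (!![(1 : ℝ), 1, 1;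
         v₁.1, v₂.1, v₃.1;
         v₁.2, v₂.2, v₃.2]).det
      = del v₁ v₂ - del v₁ v₃ + del v₂ v₃ := by
    simp [Matrix.det_fin_three, del]; ring
  have hp1 : (0:ℝ) ≤ l₁ / l₃ := le_of_lt (div_pos h1 h3)
  have hp2 : (0:ℝ) ≤ l₂ / l₃ := le_of_lt (div_pos h2 h3)
  rw [hdet, d23, d13]
  rw [show del v₁ v₂ - -(l₂ / l₃) * del v₁ v₂ + l₁ / l₃ * del v₁ v₂
      = (1 + l₂ / l₃ + l₁ / l₃) * del v₁ v₂ by ring]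
  simp only [abs_mul, abs_neg, abs_of_nonneg hp1, abs_of_nonneg hp2,
    abs_of_nonneg (by linarith : (0:ℝ) ≤ 1 + l₂ / l₃ + l₁ / l₃)]
  ring
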